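/- The conjugate of the spherical blow-up Ψ_N by the central projection is the Euclidean inversion: Id^{-1} ∘ α_N ∘ Ψ_N ∘ α_N^{-1} ∘ Id equals the map x ↦ −x/‖x‖² on ℝ^{n+1}\{0}. -/

import Mathlib

open scoped RealInnerProductSpace

noncomputable def northPole (n : ℕ) : EuclideanSpace ℝ (Fin (n+2)) :=
  EuclideanSpace.single (Fin.last (n+1)) (1 : ℝ)

noncomputable def sphBlowUp {n : ℕ} (P : EuclideanSpace ℝ (Fin (n+2))) :
    EuclideanSpace ℝ (Fin (n+2)) :=
  (Real.sqrt (1 - ⟪northPole n, P⟫ ^ 2))⁻¹ •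
    (northPole n - ⟪northPole n, P⟫ • P)

/-- `Id(x) = (x,1)`. -/
noncomputable def liftOne {n : ℕ} (x : EuclideanSpace ℝ (Fin (n+1))) :
    EuclideanSpace ℝ (Fin (n+2)) :=
  WithLp.toLp 2 (fun i : Fin (n+2) => if h : (i : ℕ) < n + 1 then x ⟨i, h⟩ else 1)

/-- `Id⁻¹ ∘ α_N` : central projection followed by dropping the last coordinate. -/
noncomputable def centProj {n : ℕ} (Q : EuclideanSpace ℝ (Fin (n+2))) :
    EuclideanSpace ℝ (Fin (n+1)) :=
  WithLp.toLp 2 (fun i => Q i.castSucc / Q (Fin.last (n+1)))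

/-- `Id⁻¹ ∘ α_N ∘ Ψ_N ∘ α_N⁻¹ ∘ Id` is the inversion `x ↦ -x/‖x‖²`. -/
theorem stmt_14 {n : ℕ} (x : EuclideanSpace ℝ (Fin (n+1))) (hx : x ≠ 0) :
    centProj (sphBlowUp (‖liftOne x‖⁻¹ • liftOne x)) = -((‖x‖^2)⁻¹ • x) := by
  have hxn : ‖x‖ ≠ 0 := norm_ne_zero_iff.mpr hx
  set L := liftOne x with hL
  have hLlast : L (Fin.last (n+1)) = 1 := by simp [liftOne, hL]
  have hLcast : ∀ i : Fin (n+1), L i.castSucc = x i := by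
    intro i
    simp only [hL, liftOne, PiLp.toLp_apply, Fin.coe_castSucc, i.isLt, dif_pos]
  have hr2 : ‖L‖^2 = ‖x‖^2 + 1 := by
    have h1 : ‖L‖^2 = ∑ i, L i ^ 2 := by
      rw [EuclideanSpace.norm_eq, Real.sq_sqrt (by positivity)]
      simp [sq_abs]
    have h2 : ‖x‖^2 = ∑ i, x i ^ 2 := by
      rw [EuclideanSpace.norm_eq, Real.sq_sqrt (by positivity)]
      simp [sq_abs]
    rw [h1, h2, Fin.sum_univ_castSucc]
    simp [hLlast, hLcast]
  have hrpos : (0:ℝ) < ‖L‖ := by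
    have : (0:ℝ) < ‖L‖^2 := by rw [hr2]; positivity
    nlinarith [norm_nonneg L]
  have hrne : ‖L‖ ≠ 0 := ne_of_gt hrpos
  have hinner : ⟪northPole n, ‖L‖⁻¹ • L⟫ = ‖L‖⁻¹ := by
    simp [northPole, EuclideanSpace.inner_single_left, real_inner_smul_right, hLlast]
  have hkey : 1 - (‖L‖⁻¹)^2 = ‖x‖^2 / ‖L‖^2 := by
    field_simp
    linarith [hr2]
  have hcne : (Real.sqrt (1 - (‖L‖⁻¹)^2))⁻¹ ≠ 0 := by
    rw [hkey]
    positivity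
  ext i
  have hne : (i.castSucc : Fin (n+2)) ≠ Fin.last (n+1) := (Fin.castSucc_lt_last i).ne
  simp only [centProj, sphBlowUp, hinner, PiLp.smul_apply, PiLp.sub_apply, smul_eq_mul,
    PiLp.neg_apply, PiLp.toLp_apply]
  rw [mul_div_mul_left _ _ hcne]
  simp only [northPole, EuclideanSpace.single_apply, if_neg hne, if_pos rfl,
    hLcast, hLlast]
  rw [if_pos trivial, show ‖L‖⁻¹ * (‖L‖⁻¹ * (1:ℝ)) = ‖L‖⁻¹^2 by ring, hkey]
  field_simp
  ring
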